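/- arXiv:2410.19350 — 2 statements merged into one kernel-verified Lean document; each statement's English description precedes it below -/
import Mathlib

section
/- Let s ≥ 3 and let S be an s×s latently-skew-symmetric real matrix. Let j₁, j₂ ∈ {1, …, s−1} be two distinct indices such that S_{j₁,j₁} ≠ 0 and the (j₂,j₂) entry of GJ⁺_{j₁}(S) is nonzero. Then the matrix GJ⁺_{j₂}(GJ⁺_{j₁}(S)), obtained by applying complementary Gauss-Jordan-plus pivoting in column j₁ followed by complementary Gauss-Jordan-plus pivoting in column j₂, is latently-skew-symmetric. -/
/-- The last index of `Fin s`, given `0 < s`. -/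
def lastIdx (s : ℕ) (hs : 0 < s) : Fin s := ⟨s - 1, Nat.sub_lt hs Nat.one_pos⟩

/-- An `s × s` real matrix `S` is latently-skew-symmetric if its bottom-right entry is `0`
and there exist reals `β i` such that adding `β i` times the last row of `S` to row `i`,
for each `i`, yields a skew-symmetric matrix. -/
def IsLSkewSym {s : ℕ} (hs : 0 < s) (S : Matrix (Fin s) (Fin s) ℝ) : Prop :=
  S (lastIdx s hs) (lastIdx s hs) = 0 ∧
    ∃ β : Fin s → ℝ,
      ∀ i j, S i j + β i * S (lastIdx s hs) j = -(S j i + β j * S (lastIdx s hs) i)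

/-- Complementary Gauss-Jordan-plus pivoting of `S` in column `j` (pivot at `(j,j)`). -/
noncomputable def GJplus {s : ℕ} (S : Matrix (Fin s) (Fin s) ℝ) (j : Fin s) : Matrix (Fin s) (Fin s) ℝ :=
  Matrix.of fun i k =>
    if i = j then (if k = j then 1 / S j j else S j k / S j j)
    else (if k = j then -(S i j) / S j j else S i k - S i j * S j k / S j j)


open Matrix


private lemma ssplit {s : ℕ} (f : Fin s → ℝ) (p : Fin s) :
    ∑ i, f i = f p + ∑ i ∈ Finset.univ.erase p, f i :=
  (Finset.add_sum_erase _ f (Finset.mem_univ p)).symm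

private lemma ssplit2 {s : ℕ} (f : Fin s → ℝ) (p q : Fin s) (hpq : p ≠ q) :
    ∑ i, f i = f p + f q + ∑ i ∈ (Finset.univ.erase p).erase q, f i := by
  rw [ssplit f p, add_assoc]
  congr 1
  exact (Finset.add_sum_erase _ f (Finset.mem_erase.mpr ⟨hpq.symm, Finset.mem_univ q⟩)).symm

/-- The quadratic form associated to a latently-skew-symmetric matrix vanishes. -/
private lemma quadS {s : ℕ} (S : Matrix (Fin s) (Fin s) ℝ) (n : Fin s) (β : Fin s → ℝ)
    (hB : ∀ i j, S i j + β i * S n j = -(S j i + β j * S n i)) (x : Fin s → ℝ) :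
    (∑ i, x i * (S *ᵥ x) i) + (∑ i, β i * x i) * (S *ᵥ x) n = 0 := by
  have key : (∑ i, ∑ k, x i * x k * (S i k + β i * S n k)) = 0 := by
    have h1 : (∑ i, ∑ k, x i * x k * (S i k + β i * S n k))
        = -(∑ i, ∑ k, x i * x k * (S i k + β i * S n k)) := by
      nth_rewrite 2 [Finset.sum_comm]
      rw [← Finset.sum_neg_distrib]
      refine Finset.sum_congr rfl fun i _ => ?_
      rw [← Finset.sum_neg_distrib]
      refine Finset.sum_congr rfl fun k _ => ?_
      rw [hB i k]
      ring
    linarith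
  rw [← key]
  have h2 : ∀ i, x i * (S *ᵥ x) i = ∑ k, x i * x k * S i k := by
    intro i
    show x i * (∑ k, S i k * x k) = _
    rw [Finset.mul_sum]
    exact Finset.sum_congr rfl fun k _ => by ring
  have h3 : (∑ i, β i * x i) * (S *ᵥ x) n = ∑ i, ∑ k, x i * x k * (β i * S n k) := by
    show (∑ i, β i * x i) * (∑ k, S n k * x k) = _
    rw [Finset.sum_mul]
    refine Finset.sum_congr rfl fun i _ => ?_
    rw [Finset.mul_sum]
    exact Finset.sum_congr rfl fun k _ => by ring
  rw [h3, Finset.sum_congr rfl fun i _ => h2 i, ← Finset.sum_add_distrib]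
  refine Finset.sum_congr rfl fun i _ => ?_
  rw [← Finset.sum_add_distrib]
  exact Finset.sum_congr rfl fun k _ => by ring
/-- Exchange property of the GJ⁺ pivot. -/
private lemma exchange {s : ℕ} (S : Matrix (Fin s) (Fin s) ℝ) (j : Fin s) (h : S j j ≠ 0)
    (w : Fin s → ℝ) :
    ∃ x : Fin s → ℝ, (∀ k, k ≠ j → x k = w k) ∧ (S *ᵥ x) j = -(w j) ∧
      (∀ i, i ≠ j → (GJplus S j *ᵥ w) i = (S *ᵥ x) i) ∧ (GJplus S j *ᵥ w) j = -(x j) := by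
  set Sig2 : ℝ := ∑ k ∈ Finset.univ.erase j, S j k * w k with hSig2
  set c : ℝ := (-(w j) - Sig2) / S j j with hc
  refine ⟨Function.update w j c, fun k hk => Function.update_of_ne hk _ _, ?_, ?_, ?_⟩
  · -- (S *ᵥ x) j = -(w j)
    show (∑ k, S j k * Function.update w j c k) = -(w j)
    rw [ssplit _ j]
    have h1 : ∑ k ∈ Finset.univ.erase j, S j k * Function.update w j c k = Sig2 := by
      rw [hSig2]
      exact Finset.sum_congr rfl fun k hk => by
        rw [Function.update_of_ne (Finset.mem_erase.mp hk).1]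
    rw [h1, Function.update_self, hc]
    field_simp
    ring
  · -- off-pivot rows
    intro i hi
    show (∑ k, GJplus S j i k * w k) = ∑ k, S i k * Function.update w j c k
    rw [ssplit _ j, ssplit _ j]
    have h1 : ∑ k ∈ Finset.univ.erase j, S i k * Function.update w j c k
        = ∑ k ∈ Finset.univ.erase j, S i k * w k :=
      Finset.sum_congr rfl fun k hk => by
        rw [Function.update_of_ne (Finset.mem_erase.mp hk).1]
    have h2 : ∑ k ∈ Finset.univ.erase j, GJplus S j i k * w k
        = (∑ k ∈ Finset.univ.erase j, S i k * w k) - S i j / S j j * Sig2 := by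
      rw [hSig2, Finset.mul_sum, ← Finset.sum_sub_distrib]
      exact Finset.sum_congr rfl fun k hk => by
        simp only [GJplus, Matrix.of_apply, if_neg hi, if_neg (Finset.mem_erase.mp hk).1]
        ring
    rw [h1, h2]
    simp only [GJplus, Matrix.of_apply, if_neg hi, if_pos rfl, Function.update_self, hc, eq_self_iff_true, if_true]
    field_simp
    ring
  · -- pivot row
    show (∑ k, GJplus S j j k * w k) = -(Function.update w j c j)
    rw [ssplit _ j]
    have h2 : ∑ k ∈ Finset.univ.erase j, GJplus S j j k * w k = 1 / S j j * Sig2 := by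
      rw [hSig2, Finset.mul_sum]
      exact Finset.sum_congr rfl fun k hk => by
        simp only [GJplus, Matrix.of_apply, eq_self_iff_true, if_true, if_neg (Finset.mem_erase.mp hk).1]
        ring
    rw [h2]
    simp only [GJplus, Matrix.of_apply, if_pos rfl, Function.update_self, hc, eq_self_iff_true, if_true]
    field_simp
    ring



/-- For an `s × s` latently-skew-symmetric matrix `S` with `s ≥ 3`,
applying complementary GJ⁺ pivoting in column `j₁` and then in column `j₂`
(two distinct non-last columns with nonzero pivots) yields a latently-skew-symmetric matrix. -/
theorem stmt0 (s : ℕ) (hs : 3 ≤ s) (S : Matrix (Fin s) (Fin s) ℝ)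
    (hS : IsLSkewSym (by omega) S)
    (j₁ j₂ : Fin s) (hj₁ : j₁ ≠ lastIdx s (by omega)) (hj₂ : j₂ ≠ lastIdx s (by omega))
    (hne : j₁ ≠ j₂) (hpiv₁ : S j₁ j₁ ≠ 0) (hpiv₂ : GJplus S j₁ j₂ j₂ ≠ 0) :
    IsLSkewSym (by omega) (GJplus (GJplus S j₁) j₂) := by
  obtain ⟨h0, β, hB⟩ := hS
  set n : Fin s := lastIdx s (by omega) with hn
  set M1 : Matrix (Fin s) (Fin s) ℝ := GJplus S j₁ with hM1
  set M : Matrix (Fin s) (Fin s) ℝ := GJplus M1 j₂ with hM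
  have hb1 : M1 j₂ j₂ ≠ 0 := hpiv₂
  have hn1 : n ≠ j₁ := Ne.symm hj₁
  have hn2 : n ≠ j₂ := Ne.symm hj₂
  have hne' : j₂ ≠ j₁ := Ne.symm hne
  set β' : Fin s → ℝ := fun kk =>
    (if kk = j₁ ∨ kk = j₂ then 0 else β kk) - β j₁ * M j₁ kk - β j₂ * M j₂ kk with hβ'
  -- Part 1: the bottom-right entry of M vanishes.
  have hMnn : M n n = 0 := by
    have e1 : S j₁ j₁ = -(β j₁ * S n j₁) := by have := hB j₁ j₁; linarith
    have e2 : S j₂ j₂ = -(β j₂ * S n j₂) := by have := hB j₂ j₂; linarith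
    have e3 : S j₁ n = -(S n j₁) - β n * S n j₁ := by
      have := hB j₁ n; rw [h0] at this; linarith
    have e4 : S j₂ n = -(S n j₂) - β n * S n j₂ := by
      have := hB j₂ n; rw [h0] at this; linarith
    have e5 : S j₂ j₁ = -(S j₁ j₂) - β j₁ * S n j₂ - β j₂ * S n j₁ := by
      have := hB j₁ j₂; linarith
    have key : M1 n n * M1 j₂ j₂ = M1 n j₂ * M1 j₂ n := by
      rw [hM1]
      simp only [GJplus, Matrix.of_apply, if_neg hn1, if_neg hne']
      rw [h0]
      field_simp
      rw [e1, e2, e3, e4, e5]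
      ring
    have hMnn' : M n n = (M1 n n * M1 j₂ j₂ - M1 n j₂ * M1 j₂ n) / M1 j₂ j₂ := by
      rw [hM]
      simp only [GJplus, Matrix.of_apply, if_neg hn2]
      field_simp
    rw [hMnn', key]
    simp
  -- Part 2: the vanishing of the quadratic form of M
  have quadM : ∀ w : Fin s → ℝ,
      (∑ i, w i * (M *ᵥ w) i) + (∑ i, β' i * w i) * (M *ᵥ w) n = 0 := by
    intro w
    obtain ⟨x1, hx1e, hx1j, hMx1, hMj⟩ := exchange M1 j₂ hb1 w
    obtain ⟨x, hxe, hxj, hM1x, hM1j⟩ := exchange S j₁ hpiv₁ x1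
    rw [← hM] at hMx1 hMj
    rw [← hM1] at hM1x hM1j
    have hMwj1 : (M *ᵥ w) j₁ = -(x j₁) := by rw [hMx1 j₁ hne, hM1j]
    have hMwj2 : (M *ᵥ w) j₂ = -(x j₂) := by rw [hMj, hxe j₂ hne']
    have e1 : (∑ i, w i * (M *ᵥ w) i) = ∑ i, x i * (S *ᵥ x) i := by
      rw [ssplit2 _ j₁ j₂ hne, ssplit2 _ j₁ j₂ hne]
      have c1 : ∑ i ∈ (Finset.univ.erase j₁).erase j₂, w i * (M *ᵥ w) i
          = ∑ i ∈ (Finset.univ.erase j₁).erase j₂, x i * (S *ᵥ x) i := by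
        refine Finset.sum_congr rfl fun i hi => ?_
        have hi2 : i ≠ j₂ := (Finset.mem_erase.mp hi).1
        have hi1 : i ≠ j₁ := (Finset.mem_erase.mp (Finset.mem_erase.mp hi).2).1
        rw [hMx1 i hi2, hM1x i hi1, ← hx1e i hi2, ← hxe i hi1]
      have d1 : w j₁ * (M *ᵥ w) j₁ = x j₁ * (S *ᵥ x) j₁ := by
        rw [hMwj1, hxj, hx1e j₁ hne]
        ring
      have d2 : w j₂ * (M *ᵥ w) j₂ = x j₂ * (S *ᵥ x) j₂ := by
        rw [hMwj2, ← hM1x j₂ hne', hx1j, hxe j₂ hne']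
        ring
      rw [c1, d1, d2]
    have e2 : (M *ᵥ w) n = (S *ᵥ x) n := by rw [hMx1 n hn2, hM1x n hn1]
    have e3 : (∑ i, β' i * w i) = ∑ i, β i * x i := by
      have s1 : (∑ i, β' i * w i) = (∑ i, (if i = j₁ ∨ i = j₂ then 0 else β i) * w i)
          - β j₁ * (M *ᵥ w) j₁ - β j₂ * (M *ᵥ w) j₂ := by
        have hv1 : (M *ᵥ w) j₁ = ∑ i, M j₁ i * w i := rfl
        have hv2 : (M *ᵥ w) j₂ = ∑ i, M j₂ i * w i := rfl
        rw [hv1, hv2, Finset.mul_sum, Finset.mul_sum, ← Finset.sum_sub_distrib,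
          ← Finset.sum_sub_distrib]
        refine Finset.sum_congr rfl fun i _ => ?_
        rw [hβ']
        ring
      have s2 : (∑ i, (if i = j₁ ∨ i = j₂ then 0 else β i) * w i)
          = (∑ i, β i * x i) - β j₁ * x j₁ - β j₂ * x j₂ := by
        rw [ssplit2 _ j₁ j₂ hne, ssplit2 (fun i => β i * x i) j₁ j₂ hne]
        have c2 : ∑ i ∈ (Finset.univ.erase j₁).erase j₂,
            (if i = j₁ ∨ i = j₂ then 0 else β i) * w i
            = ∑ i ∈ (Finset.univ.erase j₁).erase j₂, β i * x i := by
          refine Finset.sum_congr rfl fun i hi => ?_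
          have hi2 : i ≠ j₂ := (Finset.mem_erase.mp hi).1
          have hi1 : i ≠ j₁ := (Finset.mem_erase.mp (Finset.mem_erase.mp hi).2).1
          rw [if_neg (by tauto), ← hx1e i hi2, ← hxe i hi1]
        rw [c2, if_pos (Or.inl rfl), if_pos (Or.inr rfl)]
        ring
      rw [s1, s2, hMwj1, hMwj2]
      ring
    rw [e1, e2, e3]
    exact quadS S n β hB x
  -- Part 3: deduce the skew-symmetry relation from the quadratic form.
  refine ⟨hMnn, β', fun i k => ?_⟩
  have Qi := quadM (fun t => if t = i then 1 else 0)
  have Qk := quadM (fun t => if t = k then 1 else 0)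
  have Qu := quadM (fun t => (if t = i then 1 else 0) + (if t = k then 1 else 0))
  simp only [Matrix.mulVec, dotProduct, mul_ite, mul_one, mul_zero, mul_add, add_mul,
    ite_mul, one_mul, zero_mul, Finset.sum_add_distrib, Finset.sum_ite_eq', Finset.mem_univ,
    if_true] at Qi Qk Qu
  linear_combination Qu - Qi - Qk
end

section
/- Let s ≥ 2 and let S be an s×s latently-skew-symmetric real matrix. Then for all indices i, i' ∈ {1, …, s−1}, one has S_{s,i} · S_{i',s} = S_{s,i'} · S_{i,s}. In particular, for all i, i' ∈ {1, …, s−1} with S_{i,s} ≠ 0 and S_{i',s} ≠ 0, the ratios coincide: S_{s,i}/S_{i,s} = S_{s,i'}/S_{i',s} (the common value is the last-row/last-column ratio of S). -/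
/-- In an `s × s` latently-skew-symmetric matrix (`s ≥ 2`), the
cross-products of last-row and last-column entries agree: `S_{s,i}·S_{i',s} = S_{s,i'}·S_{i,s}`
for all non-last indices `i, i'`; in particular the last-row/last-column ratios
`S_{s,i}/S_{i,s}` coincide whenever the denominators are nonzero. -/
theorem stmt2 (s : ℕ) (hs : 2 ≤ s) (S : Matrix (Fin s) (Fin s) ℝ)
    (hS : IsLSkewSym (by omega) S) :
    let last : Fin s := lastIdx s (by omega)
    (∀ i i' : Fin s, i ≠ last → i' ≠ last →
        S last i * S i' last = S last i' * S i last) ∧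
      (∀ i i' : Fin s, i ≠ last → i' ≠ last → S i last ≠ 0 → S i' last ≠ 0 →
        S last i / S i last = S last i' / S i' last) := by
  intro last
  obtain ⟨h0, β, hT⟩ := hS
  have key : ∀ i : Fin s, S i last = -(1 + β last) * S last i := by
    intro i
    have := hT i last
    simp only [show lastIdx s (by omega : (0:ℕ) < s) = last from rfl] at this h0
    rw [h0] at this
    linarith [this]
  have cross : ∀ i i' : Fin s, S last i * S i' last = S last i' * S i last := by
    intro i i'
    rw [key i, key i']; ring
  refine ⟨fun i i' _ _ => cross i i', fun i i' _ _ h h' => ?_⟩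
  rw [div_eq_div_iff h h']
  have := cross i i'
  linarith [this]
end
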